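/- Define f_t(A) := ∫_A [ sup_{w ∈ B_2(v, 4δ_t)} λ_{d−2}((w + L^⊥) ∩ W)² − inf_{w ∈ B_2(v, 4δ_t)} λ_{d−2}((w + L^⊥) ∩ W_{−3δ_t})² ] dv for Borel sets A ⊂ W_L. Then 0 ≤ f_t(A) ≤ f_t(W_L) = O(δ_t) for all Borel sets A ⊂ W_L as δ_t tends to zero. -/

import Mathlib

open MeasureTheory Filter Asymptotics ProbabilityTheory
open scoped ENNReal NNReal Topology Classical RealInnerProductSpace Pointwise

noncomputable section

/-- `Euc d` is the Euclidean space `ℝ^d`. -/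
abbrev Euc (d : ℕ) : Type := EuclideanSpace ℝ (Fin d)

/-- `κ_n`, the volume of the `n`-dimensional unit ball. -/
def unitBallVol (n : ℕ) : ℝ := Real.pi ^ ((n : ℝ) / 2) / Real.Gamma ((n : ℝ) / 2 + 1)

/-- The Beta function `B(a,b) = Γ(a)Γ(b)/Γ(a+b)`. -/
def betaFn (a b : ℝ) : ℝ := Real.Gamma a * Real.Gamma b / Real.Gamma (a + b)

/-- The constant `c_d = 8 π κ_{d-2}² B(3, d/2)²`. -/
def cdConst (d : ℕ) : ℝ := 8 * Real.pi * unitBallVol (d - 2) ^ 2 * betaFn 3 ((d : ℝ) / 2) ^ 2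

/-- The constant `c_d' = π κ_{d-2}³ B(3, d/2)² B(4, d/2)`. -/
def cdConst' (d : ℕ) : ℝ :=
  Real.pi * unitBallVol (d - 2) ^ 3 * betaFn 3 ((d : ℝ) / 2) ^ 2 * betaFn 4 ((d : ℝ) / 2)

variable {d : ℕ}

/-- Orthogonal projection onto the plane (submodule) `L`, viewed as a map `ℝ^d → ℝ^d`. -/
def projL (L : Submodule ℝ (Euc d)) (x : Euc d) : Euc d := (Submodule.orthogonalProjection L x : Euc d)

/-- `λ_{d-2}((v + L^⊥) ∩ W)`, the `(d-2)`-dimensional (Hausdorff) measure of the slice of `W`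
through `v` orthogonal to `L`. -/
def sliceVol (L : Submodule ℝ (Euc d)) (W : Set (Euc d)) (v : Euc d) : ℝ≥0∞ :=
  μH[(d : ℝ) - 2] ((v +ᵥ ((Lᗮ : Submodule ℝ (Euc d)) : Set (Euc d))) ∩ W)

/-- The inner parallel set `W_{-r} = {x : x + r B_d ⊆ W}`. -/
def innerParallel (W : Set (Euc d)) (r : ℝ) : Set (Euc d) :=
  {x | Metric.closedBall x r ⊆ W}

/-- The projection of the segment `[v,w]` onto the plane `L`. -/
def segProj (L : Submodule ℝ (Euc d)) (v w : Euc d) : Set (Euc d) :=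
  projL L '' segment ℝ v w

/-- The quadruple `(v1, v2, w1, w2)` gives two edges (`‖v1-v2‖ ≤ δ`, `‖w1-w2‖ ≤ δ`) whose
projections onto `L` cross inside `A`. -/
def CrossIn (L : Submodule ℝ (Euc d)) (δ : ℝ) (A : Set (Euc d))
    (q : Euc d × Euc d × Euc d × Euc d) : Prop :=
  dist q.1 q.2.1 ≤ δ ∧ dist q.2.2.1 q.2.2.2 ≤ δ ∧
    (segProj L q.1 q.2.1 ∩ segProj L q.2.2.1 q.2.2.2 ∩ A).Nonempty

/-- All ordered quadruples of *distinct* points (distinct as occurrences) of a configuration. -/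
def quadruples (m : Multiset (Euc d)) : Multiset (Euc d × Euc d × Euc d × Euc d) :=
  m.bind fun a => (m.erase a).bind fun b => ((m.erase a).erase b).bind fun c =>
    (((m.erase a).erase b).erase c).map fun e => (a, b, c, e)

/-- `ξ_t(A)`: one eighth of the number of ordered quadruples of distinct vertices forming a
crossing in `A`. -/
def crossCount (L : Submodule ℝ (Euc d)) (δ : ℝ) (A : Set (Euc d))
    (m : Multiset (Euc d)) : ℝ :=
  ((quadruples m).filter (CrossIn L δ A)).card / 8

/-- The stress `S(a,b)` between two vertices. -/
def stressPair (L : Submodule ℝ (Euc d)) (wt : Euc d → Euc d → ℝ) (a b : Euc d) : ℝ :=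
  wt a b * (dist a b - dist (projL L a) (projL L b)) ^ 2

/-- The total stress `(1/2) Σ_{(v1,v2) distinct} S(v1,v2)` of a configuration. -/
def stressM (L : Submodule ℝ (Euc d)) (wt : Euc d → Euc d → ℝ) (m : Multiset (Euc d)) : ℝ :=
  (1 / 2) * (((m ×ˢ m).map fun p => stressPair L wt p.1 p.2).sum
    - (m.map fun a => stressPair L wt a a).sum)

/-- First order difference operator `D_x f(μ) = f(μ + δ_x) - f(μ)`. -/
def Dop (x : Euc d) (f : Multiset (Euc d) → ℝ) (m : Multiset (Euc d)) : ℝ :=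
  f (x ::ₘ m) - f m

/-- Second order difference operator. -/
def Dop2 (x y : Euc d) (f : Multiset (Euc d) → ℝ) (m : Multiset (Euc d)) : ℝ :=
  f (x ::ₘ y ::ₘ m) - f (y ::ₘ m) - f (x ::ₘ m) + f m

/-- Number of points of the configuration `m` lying in `A`. -/
def countIn (A : Set (Euc d)) (m : Multiset (Euc d)) : ℕ := (m.filter (· ∈ A)).card

/-- The Poisson distribution with mean `r` on `ℕ`. -/
def poissonNat (r : ℝ) : Measure ℕ :=
  Measure.sum fun n => ENNReal.ofReal (Real.exp (-r) * r ^ n / n.factorial) • Measure.dirac n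

/-- `V` is a Poisson point process with intensity measure `μ` under `P`: for pairwise disjoint
measurable sets the counts are independent Poisson random variables. -/
def IsPoissonPP {Ω : Type} [MeasurableSpace Ω] (P : Measure Ω)
    (V : Ω → Multiset (Euc d)) (μ : Measure (Euc d)) : Prop :=
  ∀ (n : ℕ) (A : Fin n → Set (Euc d)), (∀ i, MeasurableSet (A i)) →
    Pairwise (Function.onFun Disjoint A) →
    P.map (fun ω i => countIn (A i) (V ω)) = Measure.pi fun i => poissonNat (μ (A i)).toReal

/-- Expectation. -/
def meanP {Ω : Type} [MeasurableSpace Ω] (P : Measure Ω) (f : Ω → ℝ) : ℝ := ∫ ω, f ω ∂P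

/-- Covariance. -/
def covP {Ω : Type} [MeasurableSpace Ω] (P : Measure Ω) (f g : Ω → ℝ) : ℝ :=
  ∫ ω, (f ω - meanP P f) * (g ω - meanP P g) ∂P

/-- The error term `f_t(A)`: the integral over `A` of the gap between the squared supremum
slice volume of `W` and the squared infimum slice volume of `W_{-3δ_t}`. -/
def ftErr (d : ℕ) (L : Submodule ℝ (Euc d)) (W : Set (Euc d)) (δt : ℝ)
    (A : Set (Euc d)) : ℝ≥0∞ :=
  ∫⁻ v in A,
    ((⨆ w ∈ Metric.closedBall v (4 * δt) ∩ (L : Set (Euc d)), sliceVol L W w) ^ 2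
      - (⨅ w ∈ Metric.closedBall v (4 * δt) ∩ (L : Set (Euc d)),
          sliceVol L (innerParallel W (3 * δt)) w) ^ 2) ∂μH[(2 : ℝ)]


/-- Scaling of Hausdorff measure under an affine similarity `x ↦ b + c • x`. -/
lemma aux_hm_scale {d : ℕ} {a : ℝ} (ha : 0 ≤ a) {c : ℝ} (hc : 0 < c) (b : Euc d)
    (T : Set (Euc d)) :
    μH[a] ((fun x => b + c • x) '' T) = ENNReal.ofReal c ^ a * μH[a] T := by
  have h1 : (fun x : Euc d => b + c • x) '' T = b +ᵥ (c • T) := by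
    rw [← Set.image_smul, ← Set.image_vadd, ← Set.image_comp]
    rfl
  rw [h1, MeasureTheory.hausdorffMeasure_vadd b (Or.inl ha),
    MeasureTheory.Measure.hausdorffMeasure_smul₀ ha hc.ne' T, ENNReal.smul_def, smul_eq_mul]
  congr 1
  rw [ENNReal.coe_rpow_of_ne_zero (by simp [hc.ne']), ← enorm_eq_nnnorm, Real.enorm_eq_ofReal hc.le]

/-- The affine similarity `x ↦ b + c • x` as a homeomorphism. -/
def auxSim {d : ℕ} (c : ℝ) (hc : c ≠ 0) (b : Euc d) : Euc d ≃ₜ Euc d where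
  toFun x := b + c • x
  invFun y := c⁻¹ • (y - b)
  left_inv x := by simp [smul_smul, inv_mul_cancel₀ hc]
  right_inv y := by simp [smul_smul, mul_inv_cancel₀ hc]
  continuous_toFun := continuous_const.add (continuous_id.const_smul c)
  continuous_invFun := ((continuous_id.sub continuous_const).const_smul c⁻¹)

/-- Change of variables for `∫⁻ dμH[2]` under an affine similarity. -/
lemma aux_cov {d : ℕ} {c : ℝ} (hc : 0 < c) (b : Euc d) (H : Euc d → ℝ≥0∞) :
    ∫⁻ v, H v ∂(μH[(2:ℝ)] : Measure (Euc d))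
      = ENNReal.ofReal c ^ (2:ℝ) * ∫⁻ v, H (b + c • v) ∂(μH[(2:ℝ)] : Measure (Euc d)) := by
  set μ : Measure (Euc d) := μH[(2:ℝ)] with hμ
  set e : Euc d ≃ᵐ Euc d := (auxSim c hc.ne' b).toMeasurableEquiv with he
  have hmap : Measure.map e μ = (ENNReal.ofReal c⁻¹ ^ (2:ℝ)) • μ := by
    ext S hS
    rw [Measure.map_apply e.measurable hS, Measure.smul_apply, smul_eq_mul]
    have hpre : ⇑e ⁻¹' S = (fun y => (-(c⁻¹ • b)) + c⁻¹ • y) '' S := by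
      ext y
      constructor
      · intro hy
        exact ⟨e y, hy, by
          show -(c⁻¹ • b) + c⁻¹ • (b + c • y) = y
          rw [smul_add, smul_smul, inv_mul_cancel₀ hc.ne', one_smul]
          abel⟩
      · rintro ⟨x, hx, rfl⟩
        show b + c • (-(c⁻¹ • b) + c⁻¹ • x) ∈ S
        rw [smul_add, smul_neg, smul_smul, smul_smul, mul_inv_cancel₀ hc.ne', one_smul, one_smul]
        simpa using hx
    rw [hpre, aux_hm_scale (by norm_num) (inv_pos.2 hc)]
  have h2 : ∫⁻ v, H (b + c • v) ∂μ = ENNReal.ofReal c⁻¹ ^ (2:ℝ) * ∫⁻ v, H v ∂μ := by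
    have := MeasureTheory.lintegral_map_equiv (μ := μ) H e
    rw [hmap, lintegral_smul_measure] at this
    exact this.symm
  rw [h2, ← mul_assoc, ENNReal.ofReal_inv_of_pos hc, ENNReal.inv_rpow,
    ENNReal.mul_inv_cancel (ENNReal.rpow_pos (ENNReal.ofReal_pos.2 hc) ENNReal.ofReal_ne_top).ne'
      (by exact ENNReal.rpow_ne_top_of_nonneg (by norm_num) ENNReal.ofReal_ne_top), one_mul]

/-- A bounded subset of a `k`-dimensional subspace has finite `μH[k]`. -/
lemma aux_subspace_finite {d : ℕ} (K : Submodule ℝ (Euc d)) {a : ℝ}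
    (ha : (Module.finrank ℝ K : ℝ) = a) {S : Set (Euc d)} (hSK : S ⊆ (K : Set (Euc d)))
    (hSb : Bornology.IsBounded S) : μH[a] S < ⊤ := by
  subst ha
  set k := Module.finrank ℝ K with hk
  let g : EuclideanSpace ℝ (Fin k) →ₗᵢ[ℝ] Euc d :=
    K.subtypeₗᵢ.comp (stdOrthonormalBasis ℝ K).repr.symm.toLinearIsometry
  have hrange : S ⊆ Set.range ⇑g := by
    intro x hx
    exact ⟨(stdOrthonormalBasis ℝ K).repr ⟨x, hSK hx⟩, by
      simp [g, LinearIsometry.coe_comp]⟩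
  have himg : ⇑g '' (⇑g ⁻¹' S) = S := Set.image_preimage_eq_of_subset hrange
  have h1 : μH[(k:ℝ)] S = μH[(k:ℝ)] (⇑g ⁻¹' S) := by
    conv_lhs => rw [← himg]
    rw [g.isometry.hausdorffMeasure_image (Or.inl (by positivity))]
  rw [h1]
  have hb : Bornology.IsBounded (⇑g ⁻¹' S) := g.isometry.antilipschitz.isBounded_preimage hSb
  have hcomp : IsCompact (closure (⇑g ⁻¹' S)) :=
    Metric.isCompact_of_isClosed_isBounded isClosed_closure hb.closure
  calc μH[(k:ℝ)] (⇑g ⁻¹' S) ≤ μH[(k:ℝ)] (closure (⇑g ⁻¹' S)) := measure_mono subset_closure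
    _ < ⊤ := by
        have : (k : ℝ) = ((Module.finrank ℝ (EuclideanSpace ℝ (Fin k)) : ℕ) : ℝ) := by
          rw [finrank_euclideanSpace_fin]
        rw [this]
        exact hcomp.measure_lt_top

lemma aux_pow_diff (n : ℕ) {s : ℝ} (h0 : 0 ≤ s) (h1 : s ≤ 1) :
    (1 + s) ^ n - (1 - s) ^ n ≤ n * 2 ^ n * s := by
  induction n with
  | zero => simp
  | succ n ih =>
    have hA : 0 ≤ (1 - s) ^ n := pow_nonneg (by linarith) n
    have hB : (1 - s) ^ n ≤ 2 ^ n := pow_le_pow_left₀ (by linarith) (by linarith) n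
    have h3 : (1 + s) * ((1 + s) ^ n - (1 - s) ^ n) ≤ (1 + s) * (n * 2 ^ n * s) :=
      mul_le_mul_of_nonneg_left ih (by linarith)
    have h4 : s * (1 - s) ^ n ≤ s * 2 ^ n := mul_le_mul_of_nonneg_left hB h0
    have h5 : (0:ℝ) ≤ (n : ℝ) * 2 ^ n * s := by positivity
    have h6 : (1 + s) * ((n:ℝ) * 2 ^ n * s) ≤ 2 * ((n:ℝ) * 2 ^ n * s) :=
      mul_le_mul_of_nonneg_right (by linarith) h5
    push_cast
    calc (1 + s) ^ (n + 1) - (1 - s) ^ (n + 1)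
        = (1 + s) * ((1 + s) ^ n - (1 - s) ^ n) + 2 * (s * (1 - s) ^ n) := by ring
      _ ≤ 2 * ((n:ℝ) * 2 ^ n * s) + 2 * (s * 2 ^ n) := by linarith
      _ = ((n:ℝ) + 1) * 2 ^ (n + 1) * s := by ring

lemma aux_slice_vadd_perp {d : ℕ} (L : Submodule ℝ (Euc d)) (W : Set (Euc d))
    {τ : Euc d} (hτ : τ ∈ Lᗮ) (u : Euc d) :
    sliceVol L W (τ + u) = sliceVol L W u := by
  unfold sliceVol
  have hset : (τ + u) +ᵥ ((Lᗮ : Submodule ℝ (Euc d)) : Set (Euc d))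
      = u +ᵥ ((Lᗮ : Submodule ℝ (Euc d)) : Set (Euc d)) := by
    ext x
    simp only [Set.mem_vadd_set, vadd_eq_add, SetLike.mem_coe]
    constructor
    · rintro ⟨l, hl, rfl⟩
      exact ⟨τ + l, Lᗮ.add_mem hτ hl, by abel⟩
    · rintro ⟨l, hl, rfl⟩
      exact ⟨l - τ, Lᗮ.sub_mem hl hτ, by abel⟩
  rw [hset]

lemma aux_slice_mono_translate {d : ℕ} (hq : 0 ≤ (d:ℝ) - 2) (L : Submodule ℝ (Euc d))
    (W₁ W₂ : Set (Euc d)) (v w : Euc d) (h : ∀ x ∈ W₁, x + (w - v) ∈ W₂) :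
    sliceVol L W₁ v ≤ sliceVol L W₂ w := by
  unfold sliceVol
  rw [← MeasureTheory.hausdorffMeasure_vadd (X := Euc d) (d := (d:ℝ) - 2) (w - v)
    (Or.inl hq) ((v +ᵥ ((Lᗮ : Submodule ℝ (Euc d)) : Set (Euc d))) ∩ W₁)]
  apply measure_mono
  rintro x hx
  obtain ⟨y, ⟨hy1, hy2⟩, rfl⟩ := hx
  obtain ⟨l, hl, rfl⟩ := hy1
  constructor
  · exact ⟨l, hl, by simp only [vadd_eq_add]; abel⟩
  · have := h _ hy2
    simpa [vadd_eq_add, add_comm] using this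

lemma aux_slice_homothety {d : ℕ} (hq : 0 ≤ (d:ℝ) - 2) (L : Submodule ℝ (Euc d))
    (x0 v : Euc d) {c : ℝ} (hc : 0 < c) (W : Set (Euc d)) :
    sliceVol L ((fun x => x0 + c • (x - x0)) '' W) v
      = ENNReal.ofReal c ^ ((d:ℝ) - 2) * sliceVol L W (x0 + c⁻¹ • (v - x0)) := by
  set u : Euc d := x0 + c⁻¹ • (v - x0) with hu
  have hinj : Function.Injective (fun x : Euc d => x0 + c • (x - x0)) := by
    intro x y hxy
    simp only at hxy
    have h1 : c • (x - x0) = c • (y - x0) := by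
      have := add_left_cancel hxy; exact this
    have h2 := smul_right_injective (Euc d) hc.ne' h1
    exact sub_left_injective h2
  have hpu : ∀ z : Euc d, x0 + c • ((u + z) - x0) = v + c • z := by
    intro z
    show x0 + c • ((x0 + c⁻¹ • (v - x0) + z) - x0) = v + c • z
    have h1 : (x0 + c⁻¹ • (v - x0) + z) - x0 = c⁻¹ • (v - x0) + z := by abel
    rw [h1, smul_add, smul_smul, mul_inv_cancel₀ hc.ne', one_smul]
    abel
  have hset : (v +ᵥ ((Lᗮ : Submodule ℝ (Euc d)) : Set (Euc d)))
        ∩ ((fun x => x0 + c • (x - x0)) '' W)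
      = (fun x => x0 + c • (x - x0)) ''
        ((u +ᵥ ((Lᗮ : Submodule ℝ (Euc d)) : Set (Euc d))) ∩ W) := by
    rw [Set.image_inter hinj]
    congr 1
    ext y
    simp only [Set.mem_image, Set.mem_vadd_set, vadd_eq_add]
    constructor
    · rintro ⟨l, hl, rfl⟩
      refine ⟨u + c⁻¹ • l, ⟨c⁻¹ • l, SetLike.mem_coe.2 (Lᗮ.smul_mem _ (SetLike.mem_coe.1 hl)), rfl⟩, ?_⟩
      rw [hpu, smul_smul, mul_inv_cancel₀ hc.ne', one_smul]
    · rintro ⟨x, ⟨l, hl, rfl⟩, rfl⟩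
      exact ⟨c • l, SetLike.mem_coe.2 (Lᗮ.smul_mem _ (SetLike.mem_coe.1 hl)), (hpu l).symm⟩
  unfold sliceVol
  rw [hset]
  have hfun : (fun x : Euc d => x0 + c • (x - x0)) = fun x => (x0 - c • x0) + c • x := by
    funext x; module
  rw [hfun, aux_hm_scale hq hc]

lemma aux_integral_homothety {d : ℕ} (hq : 0 ≤ (d:ℝ) - 2) (L : Submodule ℝ (Euc d))
    (W : Set (Euc d)) (x0 : Euc d) {c : ℝ} (hc : 0 < c) :
    ∫⁻ v in (L : Set (Euc d)), sliceVol L ((fun x => x0 + c • (x - x0)) '' W) v ^ 2 ∂μH[(2:ℝ)]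
      = (ENNReal.ofReal c ^ ((d:ℝ) - 2)) ^ 2 * (ENNReal.ofReal c ^ (2:ℝ))
          * ∫⁻ v in (L : Set (Euc d)), sliceVol L W v ^ 2 ∂μH[(2:ℝ)] := by
  have hLmeas : MeasurableSet (L : Set (Euc d)) :=
    (Submodule.closed_of_finiteDimensional L).measurableSet
  set f : Euc d → ℝ≥0∞ := sliceVol L W with hf
  set k : ℝ≥0∞ := ENNReal.ofReal c ^ ((d:ℝ) - 2) with hk
  have hkfin : k ≠ ⊤ := ENNReal.rpow_ne_top_of_nonneg hq ENNReal.ofReal_ne_top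
  set ψ : Euc d → Euc d := fun v => x0 + c⁻¹ • (v - x0) with hψ
  have step1 : ∫⁻ v in (L : Set (Euc d)),
        sliceVol L ((fun x => x0 + c • (x - x0)) '' W) v ^ 2 ∂μH[(2:ℝ)]
      = k ^ 2 * ∫⁻ v in (L : Set (Euc d)), f (ψ v) ^ 2 ∂μH[(2:ℝ)] := by
    rw [← lintegral_const_mul' _ _ (ENNReal.pow_ne_top hkfin)]
    exact lintegral_congr fun v => by
      rw [aux_slice_homothety hq L x0 v hc W]; ring
  rw [step1, mul_assoc]
  congr 1
  obtain ⟨τ, hτmem, hτ0sub⟩ : ∃ τ, τ ∈ Lᗮ ∧ (x0 - c⁻¹ • x0) - τ ∈ L :=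
    ⟨(x0 - c⁻¹ • x0) - (Submodule.orthogonalProjection L (x0 - c⁻¹ • x0) : Euc d),
      Submodule.sub_starProjection_mem_orthogonal (K := L) _, by
        rw [sub_sub_cancel]; exact SetLike.coe_mem _⟩
  have hψp : ∀ w : Euc d, ψ (x0 + c • (w - x0)) = w := by
    intro w
    show x0 + c⁻¹ • ((x0 + c • (w - x0)) - x0) = w
    rw [add_sub_cancel_left, smul_smul, inv_mul_cancel₀ hc.ne', one_smul]
    abel
  have e1 : ∀ w : Euc d, c⁻¹ • (x0 + c • (w - x0)) = w - (x0 - c⁻¹ • x0) := by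
    intro w
    rw [smul_add, smul_smul, inv_mul_cancel₀ hc.ne', one_smul]
    abel
  have hmem : ∀ w : Euc d, (x0 + c • (w - x0) ∈ L) ↔ w ∈ τ +ᵥ (L : Set (Euc d)) := by
    intro w
    constructor
    · intro hw
      have h1 : w - (x0 - c⁻¹ • x0) ∈ L := by rw [← e1]; exact L.smul_mem _ hw
      have h2 : w - τ ∈ L := by
        have h3 : (w - (x0 - c⁻¹ • x0)) + ((x0 - c⁻¹ • x0) - τ) = w - τ := by abel
        rw [← h3]; exact L.add_mem h1 hτ0sub
      exact ⟨w - τ, h2, by simp only [vadd_eq_add]; abel⟩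
    · rintro ⟨y, hy, rfl⟩
      simp only [vadd_eq_add, SetLike.mem_coe] at *
      have h1 : (τ + y) - (x0 - c⁻¹ • x0) ∈ L := by
        have h3 : (τ + y) - (x0 - c⁻¹ • x0) = y - ((x0 - c⁻¹ • x0) - τ) := by abel
        rw [h3]; exact L.sub_mem hy hτ0sub
      have h2 : c⁻¹ • (x0 + c • ((τ + y) - x0)) ∈ L := by rw [e1]; exact h1
      rwa [Submodule.smul_mem_iff _ (inv_ne_zero hc.ne')] at h2
  have hT : ∫⁻ w, (τ +ᵥ (L : Set (Euc d))).indicator (fun w => f w ^ 2) w ∂μH[(2:ℝ)]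
      = ∫⁻ u, (L : Set (Euc d)).indicator (fun w => f w ^ 2) u ∂μH[(2:ℝ)] := by
    have h0 := aux_cov one_pos τ ((τ +ᵥ (L : Set (Euc d))).indicator (fun w => f w ^ 2))
    simp only [ENNReal.ofReal_one, ENNReal.one_rpow, one_mul, one_smul] at h0
    rw [h0]
    refine lintegral_congr fun u => ?_
    by_cases hu : u ∈ (L : Set (Euc d))
    · have hmu : τ + u ∈ τ +ᵥ (L : Set (Euc d)) := Set.mem_vadd_set.2 ⟨u, hu, rfl⟩
      rw [Set.indicator_of_mem hmu, Set.indicator_of_mem hu]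
      exact congrArg (· ^ 2) (aux_slice_vadd_perp L W hτmem u)
    · rw [Set.indicator_of_notMem, Set.indicator_of_notMem hu]
      rintro ⟨y, hy, hyeq⟩
      simp only [vadd_eq_add] at hyeq
      exact hu (by rwa [← add_left_cancel hyeq])
  calc ∫⁻ v in (L : Set (Euc d)), f (ψ v) ^ 2 ∂μH[(2:ℝ)]
      = ∫⁻ v, (L : Set (Euc d)).indicator (fun v => f (ψ v) ^ 2) v ∂μH[(2:ℝ)] := by
        rw [lintegral_indicator hLmeas]
    _ = ENNReal.ofReal c ^ (2:ℝ)
        * ∫⁻ w, (L : Set (Euc d)).indicator (fun v => f (ψ v) ^ 2)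
            ((x0 - c • x0) + c • w) ∂μH[(2:ℝ)] :=
        aux_cov hc (x0 - c • x0) ((L : Set (Euc d)).indicator fun v => f (ψ v) ^ 2)
    _ = ENNReal.ofReal c ^ (2:ℝ)
        * ∫⁻ w, (τ +ᵥ (L : Set (Euc d))).indicator (fun w => f w ^ 2) w ∂μH[(2:ℝ)] := by
        congr 1
        refine lintegral_congr fun w => ?_
        have harg : (x0 - c • x0) + c • w = x0 + c • (w - x0) := by module
        rw [harg]
        by_cases hw : x0 + c • (w - x0) ∈ L
        · rw [Set.indicator_of_mem hw, Set.indicator_of_mem ((hmem w).1 hw), hψp]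
        · rw [Set.indicator_of_notMem hw,
            Set.indicator_of_notMem (fun h2 => hw ((hmem w).2 h2))]
    _ = ENNReal.ofReal c ^ (2:ℝ)
        * ∫⁻ u, (L : Set (Euc d)).indicator (fun w => f w ^ 2) u ∂μH[(2:ℝ)] := by rw [hT]
    _ = ENNReal.ofReal c ^ (2:ℝ) * ∫⁻ v in (L : Set (Euc d)), f v ^ 2 ∂μH[(2:ℝ)] := by
        rw [lintegral_indicator hLmeas]


lemma aux_X_eq {x : ℝ} (hx : 0 < x) {q : ℝ} (hq : 0 ≤ q) {n : ℕ} (hn : (n:ℝ) = 2*q + 2) :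
    (ENNReal.ofReal x ^ q) ^ 2 * (ENNReal.ofReal x ^ (2:ℝ)) = ENNReal.ofReal (x ^ n) := by
  rw [ENNReal.ofReal_rpow_of_pos hx, ENNReal.ofReal_rpow_of_pos hx,
    ← ENNReal.ofReal_pow (Real.rpow_nonneg hx.le q), ← ENNReal.ofReal_mul (by positivity)]
  congr 1
  rw [← Real.rpow_natCast (x ^ q) 2, ← Real.rpow_mul hx.le, ← Real.rpow_add hx,
    ← Real.rpow_natCast x n, hn]
  norm_num
  ring_nf

set_option maxHeartbeats 2000000 in
/-- **Lemma 5 (Uniform error bound).** `0 ≤ f_t(A) ≤ f_t(W_L) = O(δ_t)` for all Borel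
`A ⊆ W_L` as `δ_t → 0`. -/
theorem uniform_error_bound
    (d : ℕ) (hd : 3 ≤ d)
    (W : Set (Euc d)) (hWcomp : IsCompact W) (hWconv : Convex ℝ W)
    (hWint : (interior W).Nonempty) (hWvol : volume W = 1)
    (L : Submodule ℝ (Euc d)) (hL : Module.finrank ℝ L = 2)
    (δ : ℝ → ℝ) (hδpos : ∀ t > 0, 0 < δ t) (hδ0 : Tendsto δ atTop (𝓝 0)) :
    (∀ t > 0, ∀ A : Set (Euc d), MeasurableSet A → A ⊆ projL L '' W →
      ftErr d L W (δ t) A ≤ ftErr d L W (δ t) (projL L '' W)) ∧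
    ∃ C > (0 : ℝ), ∃ t0 : ℝ, ∀ t ≥ t0,
      ftErr d L W (δ t) (projL L '' W) ≤ ENNReal.ofReal (C * δ t) := by
  constructor
  · intro t _ A _ hsub
    exact lintegral_mono_set hsub
  · -- Part 2: the uniform O(δ) bound
    have hq : (0:ℝ) ≤ (d:ℝ) - 2 := by
      have h3d : (3:ℝ) ≤ (d:ℝ) := by exact_mod_cast hd
      linarith
    obtain ⟨x0, hx0⟩ := hWint
    obtain ⟨r0, hr0, hball0⟩ := Metric.isOpen_iff.1 isOpen_interior x0 hx0
    have hr : (0:ℝ) < r0 / 2 := by positivity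
    set r : ℝ := r0 / 2 with hrdef
    have hball : Metric.closedBall x0 r ⊆ W :=
      (Metric.closedBall_subset_ball (by rw [hrdef]; linarith)).trans
        (hball0.trans interior_subset)
    have hx0W : x0 ∈ W := hball (Metric.mem_closedBall_self hr.le)
    obtain ⟨R₁, hR₁⟩ := hWcomp.isBounded.subset_closedBall 0
    have hR₁0 : 0 ≤ R₁ := by
      have h := hR₁ hx0W
      rw [Metric.mem_closedBall] at h
      exact le_trans dist_nonneg h
    set R : ℝ := 3 * ‖x0‖ + 2 * R₁ + 1 with hRdef
    have hR₁R : R₁ ≤ R := by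
      have := norm_nonneg x0; rw [hRdef]; linarith
    have hR0 : 0 < R := by positivity
    have hLmeas : MeasurableSet (L : Set (Euc d)) :=
      (Submodule.closed_of_finiteDimensional L).measurableSet
    set M : ℝ≥0∞ := μH[(d:ℝ)-2] ((↑Lᗮ : Set (Euc d)) ∩ Metric.closedBall 0 (2*R)) with hMdef
    have hMfin : M ≠ ⊤ := by
      refine (aux_subspace_finite Lᗮ ?_ Set.inter_subset_left
        (Metric.isBounded_closedBall.subset Set.inter_subset_right)).ne
      have h1 := Submodule.finrank_add_finrank_orthogonal L
      rw [hL, finrank_euclideanSpace_fin] at h1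
      have h2 : Module.finrank ℝ Lᗮ = d - 2 := by omega
      rw [h2]
      have h3 : 2 ≤ d := by omega
      push_cast [Nat.cast_sub h3]
      ring
    set A2 : ℝ≥0∞ := μH[(2:ℝ)] (Metric.closedBall (0:Euc d) R ∩ (L : Set (Euc d))) with hA2def
    have hA2fin : A2 ≠ ⊤ := by
      refine (aux_subspace_finite L ?_ Set.inter_subset_right
        (Metric.isBounded_closedBall.subset Set.inter_subset_left)).ne
      rw [hL]; norm_num
    set I : ℝ≥0∞ := ∫⁻ v in (L : Set (Euc d)), sliceVol L W v ^ 2 ∂μH[(2:ℝ)] with hIdef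
    have hnorm : ∀ v ∈ (L : Set (Euc d)), ∀ y : Euc d, y - v ∈ Lᗮ → y ∈ W → ‖v‖ ≤ R₁ := by
      intro v hv y hy hyW
      have hinner : ⟪v, y - v⟫ = (0:ℝ) := Submodule.inner_right_of_mem_orthogonal hv hy
      have hsq : ‖y‖ ^ 2 = ‖v‖ ^ 2 + ‖y - v‖ ^ 2 := by
        have h := norm_add_sq_real v (y - v)
        rw [hinner] at h
        have h2 : v + (y - v) = y := by abel
        rw [h2] at h
        linarith
      have h1 : ‖v‖ ≤ ‖y‖ := by nlinarith [norm_nonneg y, norm_nonneg v, sq_nonneg ‖y - v‖]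
      have h2 : ‖y‖ ≤ R₁ := by
        have := hR₁ hyW
        rwa [Metric.mem_closedBall, dist_zero_right] at this
      linarith
    have hfpt : ∀ v ∈ (L : Set (Euc d)),
        sliceVol L W v ^ 2
          ≤ (Metric.closedBall (0:Euc d) R).indicator (fun _ => M ^ 2) v := by
      intro v hv
      by_cases hvB : v ∈ Metric.closedBall (0:Euc d) R
      · rw [Set.indicator_of_mem hvB]
        refine pow_le_pow_left' ?_ 2
        show μH[(d:ℝ)-2] ((v +ᵥ ((Lᗮ : Submodule ℝ (Euc d)) : Set (Euc d))) ∩ W) ≤ M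
        rw [← MeasureTheory.hausdorffMeasure_vadd (X := Euc d) (d := (d:ℝ)-2) (-v)
          (Or.inl hq) ((v +ᵥ ((Lᗮ : Submodule ℝ (Euc d)) : Set (Euc d))) ∩ W)]
        apply measure_mono
        rintro x hx
        obtain ⟨y, ⟨hy1, hyW⟩, rfl⟩ := hx
        obtain ⟨l, hl, rfl⟩ := hy1
        simp only [vadd_eq_add] at hyW ⊢
        constructor
        · show -v + (v + l) ∈ (↑Lᗮ : Set (Euc d))
          rw [neg_add_cancel_left]
          exact hl
        · rw [Metric.mem_closedBall, dist_zero_right]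
          have hy2 : ‖v + l‖ ≤ R₁ := by
            have := hR₁ hyW
            rwa [Metric.mem_closedBall, dist_zero_right] at this
          have hv1 : ‖v‖ ≤ R := by
            rwa [Metric.mem_closedBall, dist_zero_right] at hvB
          calc ‖-v + (v + l)‖ ≤ ‖(-v : Euc d)‖ + ‖v + l‖ := norm_add_le _ _
            _ = ‖v‖ + ‖v + l‖ := by rw [norm_neg]
            _ ≤ R + R₁ := add_le_add hv1 hy2
            _ ≤ 2 * R := by linarith
      · have hempty : (v +ᵥ ((Lᗮ : Submodule ℝ (Euc d)) : Set (Euc d))) ∩ W = ∅ := by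
          rw [Set.eq_empty_iff_forall_notMem]
          rintro y ⟨hy1, hyW⟩
          obtain ⟨l, hl, rfl⟩ := hy1
          simp only [vadd_eq_add] at hyW
          have hlmem : (v + l) - v ∈ Lᗮ := by simpa using hl
          have : ‖v‖ ≤ R₁ := hnorm v hv (v + l) hlmem hyW
          exact hvB (by rw [Metric.mem_closedBall, dist_zero_right]; linarith)
        have h0 : sliceVol L W v = 0 := by
          show μH[(d:ℝ)-2] ((v +ᵥ ((Lᗮ : Submodule ℝ (Euc d)) : Set (Euc d))) ∩ W) = 0
          rw [hempty]; exact measure_empty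
        rw [h0]
        simp
    have hIle : I ≤ M ^ 2 * A2 := by
      calc I ≤ ∫⁻ v in (L : Set (Euc d)),
            (Metric.closedBall (0:Euc d) R).indicator (fun _ => M ^ 2) v ∂μH[(2:ℝ)] :=
            setLIntegral_mono' hLmeas hfpt
        _ = M ^ 2 * A2 := by
            rw [lintegral_indicator measurableSet_closedBall,
              Measure.restrict_restrict measurableSet_closedBall, lintegral_const,
              Measure.restrict_apply_univ]
    have hMA : M ^ 2 * A2 ≠ ⊤ := ENNReal.mul_ne_top (ENNReal.pow_ne_top hMfin) hA2fin
    have hIfin : I ≠ ⊤ := (lt_of_le_of_lt hIle hMA.lt_top).ne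
    set IB : ℝ := (M ^ 2 * A2).toReal with hIBdef
    have hIB0 : 0 ≤ IB := ENNReal.toReal_nonneg
    have hIle2 : I ≤ ENNReal.ofReal IB := by
      rw [hIBdef, ENNReal.ofReal_toReal hMA]
      exact hIle
    set n : ℕ := 2 * d - 2 with hndef
    have hncast : ((n:ℕ):ℝ) = 2 * ((d:ℝ) - 2) + 2 := by
      have h3 : 2 ≤ 2 * d := by omega
      rw [hndef]
      push_cast [Nat.cast_sub h3]
      ring
    have hCpos : (0:ℝ) < ((n:ℝ) * 2 ^ n * 7 * IB) / r + 1 := by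
      have h1 : (0:ℝ) ≤ (n:ℝ) * 2 ^ n * 7 * IB := by
        have : (0:ℝ) ≤ (n:ℝ) * 2 ^ n * 7 := by positivity
        exact mul_nonneg this hIB0
      have h2 : (0:ℝ) ≤ ((n:ℝ) * 2 ^ n * 7 * IB) / r := div_nonneg h1 hr.le
      linarith
    refine ⟨((n:ℝ) * 2 ^ n * 7 * IB) / r + 1, hCpos, ?_⟩
    have hev : ∀ᶠ t in atTop, δ t < r / 14 :=
      hδ0.eventually_lt_const (by positivity)
    obtain ⟨t0, ht0⟩ := eventually_atTop.1 hev
    refine ⟨t0, fun t ht => ?_⟩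
    have hδlt : δ t < r / 14 := ht0 t ht
    rcases lt_trichotomy (δ t) 0 with hneg | hzero | hpos
    · -- δ t < 0 : the ball is empty, the integrand vanishes
      have hz : ∀ v : Euc d,
          ((⨆ w ∈ Metric.closedBall v (4 * δ t) ∩ (L : Set (Euc d)), sliceVol L W w) ^ 2
            - (⨅ w ∈ Metric.closedBall v (4 * δ t) ∩ (L : Set (Euc d)),
                sliceVol L (innerParallel W (3 * δ t)) w) ^ 2) = 0 := by
        intro v
        rw [Metric.closedBall_eq_empty.2 (by linarith), Set.empty_inter]
        simp [zero_tsub]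
      refine le_trans (le_of_eq ?_) zero_le
      show ftErr d L W (δ t) (projL L '' W) = 0
      unfold ftErr
      rw [lintegral_congr fun v => hz v]
      simp
    · -- δ t = 0
      have hAm : MeasurableSet (projL L '' W) := by
        have hcont : Continuous (projL L) :=
          continuous_subtype_val.comp (Submodule.orthogonalProjection L).continuous
        exact (hWcomp.image hcont).isClosed.measurableSet
      rw [hzero, mul_zero, ENNReal.ofReal_zero]
      have hz0 : ∀ v ∈ projL L '' W,
          ((⨆ w ∈ Metric.closedBall v (4 * (0:ℝ)) ∩ (L : Set (Euc d)), sliceVol L W w) ^ 2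
            - (⨅ w ∈ Metric.closedBall v (4 * (0:ℝ)) ∩ (L : Set (Euc d)),
                sliceVol L (innerParallel W (3 * (0:ℝ))) w) ^ 2) ≤ 0 := by
        intro v hv
        have hvL : v ∈ (L : Set (Euc d)) := by
          obtain ⟨y, _, rfl⟩ := hv
          exact SetLike.coe_mem _
        have hip : innerParallel W (3 * (0:ℝ)) = W := by
          ext x
          simp [innerParallel, Metric.closedBall_zero]
        have hball0' : Metric.closedBall v (4 * (0:ℝ)) ∩ (L : Set (Euc d)) = {v} := by
          rw [mul_zero, Metric.closedBall_zero]
          exact Set.inter_eq_self_of_subset_left (Set.singleton_subset_iff.2 hvL)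
        rw [hip, hball0']
        simp [tsub_self]
      unfold ftErr
      exact le_trans (setLIntegral_mono' hAm fun v hv => hz0 v hv) (by simp)
    · -- 0 < δ t : main estimate
      have hδne : δ t ≠ 0 := hpos.ne'
      set s : ℝ := 7 * δ t / r with hsdef
      have hs0 : 0 < s := by positivity
      have hsne : s ≠ 0 := hs0.ne'
      have hs12 : s ≤ 1/2 := by
        rw [hsdef, div_le_iff₀ hr]
        linarith
      have h1ps : (0:ℝ) < 1 + s := by linarith
      have h1ms : (0:ℝ) < 1 - s := by linarith
      have h1psne : (1:ℝ) + s ≠ 0 := h1ps.ne'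
      have h1msne : (1:ℝ) - s ≠ 0 := h1ms.ne'
      have hball7 : ∀ b : Euc d, ‖b‖ ≤ 7 * δ t → x0 + s⁻¹ • b ∈ W := by
        intro b hb
        apply hball
        rw [Metric.mem_closedBall, dist_eq_norm, add_sub_cancel_left, norm_smul,
          Real.norm_eq_abs, abs_of_pos (inv_pos.2 hs0)]
        have h1 : s⁻¹ * ‖b‖ ≤ s⁻¹ * (7 * δ t) :=
          mul_le_mul_of_nonneg_left hb (inv_pos.2 hs0).le
        have h2 : s⁻¹ * (7 * δ t) = r := by
          rw [hsdef]
          field_simp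
        linarith
      have hWplus : ∀ y ∈ W, ∀ b : Euc d, ‖b‖ ≤ 7 * δ t →
          y + b ∈ (fun x => x0 + (1+s) • (x - x0)) '' W := by
        intro y hy b hb
        refine ⟨x0 + (1+s)⁻¹ • (y - x0 + b), ?_, ?_⟩
        · have hzeq : x0 + (1+s)⁻¹ • (y - x0 + b)
              = (1+s)⁻¹ • y + (s/(1+s)) • (x0 + s⁻¹ • b) := by
            match_scalars <;> field_simp <;> ring
          rw [hzeq]
          exact hWconv hy (hball7 b hb) (by positivity) (by positivity) (by field_simp)
        · show x0 + (1+s) • ((x0 + (1+s)⁻¹ • (y - x0 + b)) - x0) = y + b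
          rw [add_sub_cancel_left, smul_smul, mul_inv_cancel₀ h1psne, one_smul]
          abel
      have hWminus : ∀ y ∈ W, ∀ b : Euc d, ‖b‖ ≤ 7 * δ t →
          (x0 + (1-s) • (y - x0)) + b ∈ W := by
        intro y hy b hb
        have heq : (x0 + (1-s) • (y - x0)) + b = (1-s) • y + s • (x0 + s⁻¹ • b) := by
          match_scalars <;> field_simp <;> ring
        rw [heq]
        exact hWconv hy (hball7 b hb) (by linarith) hs0.le (by ring)
      have hWmIP : (fun x => x0 + (1-s) • (x - x0)) '' W ⊆ innerParallel W (7 * δ t) := by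
        rintro x ⟨y, hy, rfl⟩
        show Metric.closedBall (x0 + (1-s) • (y - x0)) (7 * δ t) ⊆ W
        intro p hp
        have hpb : ‖p - (x0 + (1-s) • (y - x0))‖ ≤ 7 * δ t := by
          rw [← dist_eq_norm]
          exact Metric.mem_closedBall.1 hp
        have h := hWminus y hy _ hpb
        simpa using h
      have hWmWp : (fun x => x0 + (1-s) • (x - x0)) '' W
          ⊆ (fun x => x0 + (1+s) • (x - x0)) '' W := by
        rintro x ⟨y, hy, rfl⟩
        refine ⟨x0 + ((1-s)/(1+s)) • (y - x0), ?_, ?_⟩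
        · have heq : x0 + ((1-s)/(1+s)) • (y - x0)
              = ((1-s)/(1+s)) • y + (1 - (1-s)/(1+s)) • x0 := by
            match_scalars <;> field_simp <;> ring
          rw [heq]
          refine hWconv hy hx0W (div_nonneg h1ms.le h1ps.le) ?_ (by ring)
          have hle1 : (1-s)/(1+s) ≤ 1 := by
            rw [div_le_one h1ps]; linarith
          linarith
        · show x0 + (1+s) • ((x0 + ((1-s)/(1+s)) • (y - x0)) - x0) = x0 + (1-s) • (y - x0)
          rw [add_sub_cancel_left, smul_smul]
          congr 1
          field_simp
      have hGF : ∀ v : Euc d, sliceVol L ((fun x => x0 + (1-s) • (x - x0)) '' W) v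
          ≤ sliceVol L ((fun x => x0 + (1+s) • (x - x0)) '' W) v := by
        intro v
        unfold sliceVol
        exact measure_mono (Set.inter_subset_inter_right _ hWmWp)
      have hpoint : ∀ v : Euc d,
          ((⨆ w ∈ Metric.closedBall v (4 * δ t) ∩ (L : Set (Euc d)), sliceVol L W w) ^ 2
            - (⨅ w ∈ Metric.closedBall v (4 * δ t) ∩ (L : Set (Euc d)),
                sliceVol L (innerParallel W (3 * δ t)) w) ^ 2)
          ≤ sliceVol L ((fun x => x0 + (1+s) • (x - x0)) '' W) v ^ 2
            - sliceVol L ((fun x => x0 + (1-s) • (x - x0)) '' W) v ^ 2 := by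
        intro v
        refine tsub_le_tsub (pow_le_pow_left' ?_ 2) (pow_le_pow_left' ?_ 2)
        · refine iSup₂_le fun w hw => ?_
          refine aux_slice_mono_translate hq L W _ w v fun x hx => ?_
          refine hWplus x hx (v - w) ?_
          have hd1 : dist w v ≤ 4 * δ t := Metric.mem_closedBall.1 hw.1
          calc ‖v - w‖ = dist v w := (dist_eq_norm v w).symm
            _ = dist w v := dist_comm v w
            _ ≤ 4 * δ t := hd1
            _ ≤ 7 * δ t := by linarith
        · refine le_iInf₂ fun w hw => ?_
          refine aux_slice_mono_translate hq L _ (innerParallel W (3 * δ t)) v w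
            fun x hx => ?_
          show Metric.closedBall (x + (w - v)) (3 * δ t) ⊆ W
          intro p hp
          have hxIP : Metric.closedBall x (7 * δ t) ⊆ W := hWmIP hx
          apply hxIP
          rw [Metric.mem_closedBall] at hp ⊢
          have hd2 : dist (x + (w - v)) x ≤ 4 * δ t := by
            rw [dist_eq_norm, add_sub_cancel_left]
            calc ‖w - v‖ = dist w v := (dist_eq_norm w v).symm
              _ ≤ 4 * δ t := Metric.mem_closedBall.1 hw.1
          calc dist p x ≤ dist p (x + (w - v)) + dist (x + (w - v)) x := dist_triangle _ _ _
            _ ≤ 3 * δ t + 4 * δ t := add_le_add hp hd2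
            _ = 7 * δ t := by ring
      have hsubL : projL L '' W ⊆ (L : Set (Euc d)) := by
        rintro v ⟨y, _, rfl⟩
        exact SetLike.coe_mem _
      have hchain1 : ftErr d L W (δ t) (projL L '' W)
          ≤ ∫⁻ v in (L : Set (Euc d)),
              (sliceVol L ((fun x => x0 + (1+s) • (x - x0)) '' W) v ^ 2
                - sliceVol L ((fun x => x0 + (1-s) • (x - x0)) '' W) v ^ 2) ∂μH[(2:ℝ)] := by
        unfold ftErr
        exact le_trans (lintegral_mono fun v => hpoint v) (lintegral_mono_set hsubL)
      have hchain2 : ∫⁻ v in (L : Set (Euc d)),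
              (sliceVol L ((fun x => x0 + (1+s) • (x - x0)) '' W) v ^ 2
                - sliceVol L ((fun x => x0 + (1-s) • (x - x0)) '' W) v ^ 2) ∂μH[(2:ℝ)]
          ≤ (∫⁻ v in (L : Set (Euc d)),
                sliceVol L ((fun x => x0 + (1+s) • (x - x0)) '' W) v ^ 2 ∂μH[(2:ℝ)])
            - (∫⁻ v in (L : Set (Euc d)),
                sliceVol L ((fun x => x0 + (1-s) • (x - x0)) '' W) v ^ 2 ∂μH[(2:ℝ)]) := by
        have hcomp2 := aux_integral_homothety hq L W x0 h1ms
        have hXm : (ENNReal.ofReal (1-s) ^ ((d:ℝ)-2)) ^ 2 * (ENNReal.ofReal (1-s) ^ (2:ℝ))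
            = ENNReal.ofReal ((1-s) ^ n) := aux_X_eq h1ms hq (by rw [hncast])
        rw [hXm] at hcomp2
        have hGfin : (∫⁻ v in (L : Set (Euc d)),
            sliceVol L ((fun x => x0 + (1-s) • (x - x0)) '' W) v ^ 2 ∂μH[(2:ℝ)]) ≠ ⊤ := by
          rw [hcomp2]
          exact ENNReal.mul_ne_top ENNReal.ofReal_ne_top hIfin
        refine ENNReal.le_sub_of_add_le_right hGfin ?_
        refine le_trans (le_lintegral_add _ _) (le_of_eq ?_)
        exact lintegral_congr fun v => tsub_add_cancel_of_le (pow_le_pow_left' (hGF v) 2)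
      have hcomp1 := aux_integral_homothety hq L W x0 h1ps
      have hcomp2 := aux_integral_homothety hq L W x0 h1ms
      have hXp : (ENNReal.ofReal (1+s) ^ ((d:ℝ)-2)) ^ 2 * (ENNReal.ofReal (1+s) ^ (2:ℝ))
          = ENNReal.ofReal ((1+s) ^ n) := aux_X_eq h1ps hq (by rw [hncast])
      have hXm : (ENNReal.ofReal (1-s) ^ ((d:ℝ)-2)) ^ 2 * (ENNReal.ofReal (1-s) ^ (2:ℝ))
          = ENNReal.ofReal ((1-s) ^ n) := aux_X_eq h1ms hq (by rw [hncast])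
      rw [hXp] at hcomp1
      rw [hXm] at hcomp2
      have hmono : (1-s) ^ n ≤ (1+s) ^ n := pow_le_pow_left₀ h1ms.le (by linarith) n
      calc ftErr d L W (δ t) (projL L '' W)
          ≤ (∫⁻ v in (L : Set (Euc d)),
                sliceVol L ((fun x => x0 + (1+s) • (x - x0)) '' W) v ^ 2 ∂μH[(2:ℝ)])
            - (∫⁻ v in (L : Set (Euc d)),
                sliceVol L ((fun x => x0 + (1-s) • (x - x0)) '' W) v ^ 2 ∂μH[(2:ℝ)]) :=
            le_trans hchain1 hchain2
        _ = ENNReal.ofReal ((1+s) ^ n) * I - ENNReal.ofReal ((1-s) ^ n) * I := by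
            rw [hcomp1, hcomp2]
        _ = (ENNReal.ofReal ((1+s) ^ n) - ENNReal.ofReal ((1-s) ^ n)) * I :=
            (ENNReal.sub_mul fun _ _ => hIfin).symm
        _ ≤ ENNReal.ofReal ((1+s) ^ n - (1-s) ^ n) * ENNReal.ofReal IB := by
            exact mul_le_mul' (le_of_eq (ENNReal.ofReal_sub _ (by positivity)).symm) hIle2
        _ = ENNReal.ofReal (((1+s) ^ n - (1-s) ^ n) * IB) :=
            (ENNReal.ofReal_mul (by linarith [hmono])).symm
        _ ≤ ENNReal.ofReal (((n:ℝ) * 2 ^ n * 7 * IB / r + 1) * δ t) := by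
            refine ENNReal.ofReal_le_ofReal ?_
            have hdiff : (1+s) ^ n - (1-s) ^ n ≤ (n:ℝ) * 2 ^ n * s :=
              aux_pow_diff n hs0.le (by linarith)
            have h1 : ((1+s) ^ n - (1-s) ^ n) * IB ≤ ((n:ℝ) * 2 ^ n * s) * IB :=
              mul_le_mul_of_nonneg_right hdiff hIB0
            have h2 : ((n:ℝ) * 2 ^ n * s) * IB = ((n:ℝ) * 2 ^ n * 7 * IB / r) * δ t := by
              rw [hsdef]
              field_simp
            nlinarith [h1, h2, hpos, hIB0]
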